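/- arXiv:2309.11583 — 7 statements merged into one kernel-verified Lean document; each statement's English description precedes it below -/
import Mathlib

section
/- Let B be a unital associative ℂ-algebra with four pairwise commuting ℂ-linear derivations ∂₀, ∂₁, ∂₂, ∂₃. Let Λ be the exterior ℂ-algebra on four generators dx⁰, dx¹, dx², dx³ and let Ω := B ⊗_ℂ Λ with multiplication (a⊗ω)(b⊗η) := ab ⊗ ω∧η and ℂ-linear differential d determined by d(b⊗ω) := Σ_μ ∂_μ(b) ⊗ dx^μ∧ω on elements with ω a product of generators. Given φ, A₁, A₂, A₃ ∈ B, set A♭ := φ⊗dx⁰ − A₁⊗dx¹ − A₂⊗dx² − A₃⊗dx³. Then F♭ := dA♭ − i·A♭·A♭ equals D₁⊗dx⁰∧dx¹ + D₂⊗dx⁰∧dx² + D₃⊗dx⁰∧dx³ − H₃⊗dx¹∧dx² + H₂⊗dx¹∧dx³ − H₁⊗dx²∧dx³, where D and H are the noncommutative electric and magnetic fields of the potential (φ,A). -/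
noncomputable section

namespace NC

variable {B : Type*} [Ring B] [Algebra ℂ B]

/-- A ℂ-linear derivation of the (possibly noncommutative) ℂ-algebra `B`,
given as a plain function together with its defining properties. -/
structure IsDer (δ : B → B) : Prop where
  map_add : ∀ a b : B, δ (a + b) = δ a + δ b
  map_smul : ∀ (c : ℂ) (a : B), δ (c • a) = c • δ a
  leibniz : ∀ a b : B, δ (a * b) = δ a * b + a * δ b

/-- divergence `∇·X` of a triple. -/
def divg (d1 d2 d3 : B → B) (X : B × B × B) : B := d1 X.1 + d2 X.2.1 + d3 X.2.2

/-- curl `∇×X` of a triple. -/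
def curl (d1 d2 d3 : B → B) (X : B × B × B) : B × B × B :=
  (d2 X.2.2 - d3 X.2.1, d3 X.1 - d1 X.2.2, d1 X.2.1 - d2 X.1)

/-- gradient `∇a`. -/
def grad (d1 d2 d3 : B → B) (a : B) : B × B × B := (d1 a, d2 a, d3 a)

/-- apply a derivation componentwise to a triple, e.g. `∂₀X`. -/
def dmap (d0 : B → B) (X : B × B × B) : B × B × B := (d0 X.1, d0 X.2.1, d0 X.2.2)

/-- ordered cross product `X×Y` (multiplication from top to bottom). -/
def cross (X Y : B × B × B) : B × B × B :=
  (X.2.1 * Y.2.2 - X.2.2 * Y.2.1, X.2.2 * Y.1 - X.1 * Y.2.2, X.1 * Y.2.1 - X.2.1 * Y.1)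

/-- componentwise commutator `[a,X] = (aX_k - X_k a)_k`. -/
def commS (a : B) (X : B × B × B) : B × B × B :=
  (a * X.1 - X.1 * a, a * X.2.1 - X.2.1 * a, a * X.2.2 - X.2.2 * a)

/-- componentwise commutator `[X,a] = (X_k a - a X_k)_k`. -/
def commR (X : B × B × B) (a : B) : B × B × B :=
  (X.1 * a - a * X.1, X.2.1 * a - a * X.2.1, X.2.2 * a - a * X.2.2)

/-- scalar commutator `[X,Y] = Σ_k (X_k Y_k - Y_k X_k)`. -/
def commV (X Y : B × B × B) : B :=
  (X.1 * Y.1 - Y.1 * X.1) + (X.2.1 * Y.2.1 - Y.2.1 * X.2.1) +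
    (X.2.2 * Y.2.2 - Y.2.2 * X.2.2)

/-- classical part of the electric field: `E = -∂₀A - ∇φ`. -/
def Efield (d0 d1 d2 d3 : B → B) (φ : B) (A : B × B × B) : B × B × B :=
  -dmap d0 A - grad d1 d2 d3 φ

/-- classical part of the magnetic field: `Bf = ∇×A`. -/
def Bfield (d1 d2 d3 : B → B) (A : B × B × B) : B × B × B := curl d1 d2 d3 A

/-- the noncommutative electric field `D = E + i[φ,A]`. -/
def Dfield (d0 d1 d2 d3 : B → B) (φ : B) (A : B × B × B) : B × B × B :=
  Efield d0 d1 d2 d3 φ A + Complex.I • commS φ A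

/-- the noncommutative magnetic field `H = Bf + i(A×A)`. -/
def Hfield (d1 d2 d3 : B → B) (A : B × B × B) : B × B × B :=
  Bfield d1 d2 d3 A + Complex.I • cross A A

end NC


namespace NC

open scoped TensorProduct

/-- the exterior ℂ-algebra on four generators `dx⁰,…,dx³`. -/
abbrev Lam4 : Type := ExteriorAlgebra ℂ (Fin 4 → ℂ)

/-- the generator `dx^μ` of the exterior algebra. -/
noncomputable def dx (μ : Fin 4) : Lam4 := ExteriorAlgebra.ι ℂ (Pi.single μ 1)

/-- `Ω := B ⊗_ℂ Λ`, the quantum differential forms, with multiplication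
`(a⊗ω)(b⊗η) = ab ⊗ ω∧η`. -/
abbrev OmegaB (B : Type*) [Ring B] [Algebra ℂ B] : Type _ := B ⊗[ℂ] Lam4

/-- the differential `d(b⊗ω) = Σ_μ ∂_μ(b) ⊗ dx^μ∧ω`. -/
noncomputable def dOp {B : Type*} [Ring B] [Algebra ℂ B]
    (der : Fin 4 → (B →ₗ[ℂ] B)) : OmegaB B →ₗ[ℂ] OmegaB B :=
  ∑ μ : Fin 4, TensorProduct.map (der μ) (LinearMap.mulLeft ℂ (dx μ))


lemma dx_sq (μ : Fin 4) : dx μ * dx μ = 0 := ExteriorAlgebra.ι_sq_zero _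
lemma dx_swap (μ ν : Fin 4) : dx ν * dx μ = -(dx μ * dx ν) := by
  have h := ExteriorAlgebra.ι_add_mul_swap (R := ℂ) (M := Fin 4 → ℂ) (Pi.single μ 1) (Pi.single ν 1)
  unfold dx
  rw [eq_neg_iff_add_eq_zero, add_comm]; exact h

/-- the potential 1-form `A♭ = φ⊗dx⁰ - A₁⊗dx¹ - A₂⊗dx² - A₃⊗dx³`. -/
noncomputable def Aflat {B : Type*} [Ring B] [Algebra ℂ B]
    (φ : B) (A : B × B × B) : OmegaB B :=
  φ ⊗ₜ[ℂ] dx 0 - A.1 ⊗ₜ[ℂ] dx 1 - A.2.1 ⊗ₜ[ℂ] dx 2 - A.2.2 ⊗ₜ[ℂ] dx 3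

/-- the field strength `F♭ = dA♭ - i·A♭·A♭`. -/
noncomputable def Fflat {B : Type*} [Ring B] [Algebra ℂ B]
    (der : Fin 4 → (B →ₗ[ℂ] B)) (φ : B) (A : B × B × B) : OmegaB B :=
  dOp der (Aflat φ A) - Complex.I • (Aflat φ A * Aflat φ A)


set_option maxHeartbeats 1000000 in
/-- **Components of the noncommutative field strength**:
`F♭ = dA♭ - i·A♭·A♭
   = D₁⊗dx⁰∧dx¹ + D₂⊗dx⁰∧dx² + D₃⊗dx⁰∧dx³ - H₃⊗dx¹∧dx² + H₂⊗dx¹∧dx³ - H₁⊗dx²∧dx³`,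
where `D = E + i[φ,A]` and `H = Bf + i(A×A)` are the noncommutative electric and
magnetic fields of the potential `(φ,A)`. -/
theorem nc_field_strength_components {B : Type*} [Ring B] [Algebra ℂ B]
    (der : Fin 4 → (B →ₗ[ℂ] B))
    (hleib : ∀ μ : Fin 4, ∀ a b : B, der μ (a * b) = der μ a * b + a * der μ b)
    (hcomm : ∀ μ ν : Fin 4, ∀ x : B, der μ (der ν x) = der ν (der μ x))
    (φ : B) (A : B × B × B) :
    Fflat der φ A =
      (Dfield ⇑(der 0) ⇑(der 1) ⇑(der 2) ⇑(der 3) φ A).1 ⊗ₜ[ℂ] (dx 0 * dx 1) +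
      (Dfield ⇑(der 0) ⇑(der 1) ⇑(der 2) ⇑(der 3) φ A).2.1 ⊗ₜ[ℂ] (dx 0 * dx 2) +
      (Dfield ⇑(der 0) ⇑(der 1) ⇑(der 2) ⇑(der 3) φ A).2.2 ⊗ₜ[ℂ] (dx 0 * dx 3) -
      (Hfield ⇑(der 1) ⇑(der 2) ⇑(der 3) A).2.2 ⊗ₜ[ℂ] (dx 1 * dx 2) +
      (Hfield ⇑(der 1) ⇑(der 2) ⇑(der 3) A).2.1 ⊗ₜ[ℂ] (dx 1 * dx 3) -
      (Hfield ⇑(der 1) ⇑(der 2) ⇑(der 3) A).1 ⊗ₜ[ℂ] (dx 2 * dx 3) := by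
  simp only [Fflat, dOp, Aflat, Dfield, Hfield, Efield, Bfield, curl, cross, commS, dmap, grad,
    LinearMap.sum_apply, LinearMap.add_apply, Fin.sum_univ_four, map_sub, TensorProduct.map_tmul,
    LinearMap.mulLeft_apply, Algebra.TensorProduct.tmul_mul_tmul,
    mul_sub, sub_mul]
  rw [dx_swap 0 1, dx_swap 0 2, dx_swap 0 3, dx_swap 1 2, dx_swap 1 3, dx_swap 2 3,
    dx_sq 0, dx_sq 1, dx_sq 2, dx_sq 3]
  simp only [TensorProduct.tmul_neg, TensorProduct.tmul_zero, TensorProduct.sub_tmul,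
    TensorProduct.add_tmul, TensorProduct.neg_tmul, TensorProduct.smul_tmul',
    Prod.fst_add, Prod.snd_add, Prod.fst_neg, Prod.snd_neg, Prod.fst_sub, Prod.snd_sub, Prod.smul_fst, Prod.smul_snd,
    Prod.smul_mk, Prod.mk_add_mk, smul_zero, Pi.add_apply, smul_sub, smul_add, smul_neg, neg_sub, neg_neg, neg_add, sub_neg_eq_add]
  abel


end NC
end
end

section
/- (Noncommutative Gauss law for magnetism.) Let B be a unital associative ℂ-algebra with four pairwise commuting ℂ-linear derivations ∂₀, ∂₁, ∂₂, ∂₃, let φ ∈ B and A = (A₁,A₂,A₃) be arbitrary, and let Bf, D, H be as defined below. Then ∇·H = i[Bf,A], where [Bf,A] := Σ_{k=1}^{3} (Bf_k A_k − A_k Bf_k). In particular the noncommutative magnetic charge density ρ^m := i[Bf,A] is produced by every gauge potential. -/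
noncomputable section

namespace NC

theorem IsDer.map_sub' {B : Type*} [Ring B] [Algebra ℂ B] {δ : B → B}
    (h : IsDer δ) (a b : B) : δ (a - b) = δ a - δ b := by
  have hneg : δ (-b) = -δ b := by
    have := h.map_smul (-1 : ℂ) b
    simpa using this
  rw [sub_eq_add_neg, h.map_add, hneg, sub_eq_add_neg]

/-- **Noncommutative Gauss law for magnetism**: for every gauge potential `(φ,A)`
on the trivial quantum principal `U(1)`-bundle over a noncommutative space-time
with four pairwise commuting ℂ-linear derivations, `∇·H = i[Bf,A]`. -/
theorem nc_gauss_law_magnetism {B : Type*} [Ring B] [Algebra ℂ B]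
    (d0 d1 d2 d3 : B → B)
    (h0 : IsDer d0) (h1 : IsDer d1) (h2 : IsDer d2) (h3 : IsDer d3)
    (hcomm : ∀ δ ∈ [d0, d1, d2, d3], ∀ δ' ∈ [d0, d1, d2, d3], ∀ x : B,
      δ (δ' x) = δ' (δ x))
    (φ : B) (A : B × B × B) :
    divg d1 d2 d3 (Hfield d1 d2 d3 A) =
      Complex.I • commV (Bfield d1 d2 d3 A) A := by
  obtain ⟨a, b, c⟩ := A
  have c21 : ∀ x : B, d2 (d1 x) = d1 (d2 x) := hcomm d2 (by simp) d1 (by simp)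
  have c31 : ∀ x : B, d3 (d1 x) = d1 (d3 x) := hcomm d3 (by simp) d1 (by simp)
  have c32 : ∀ x : B, d3 (d2 x) = d2 (d3 x) := hcomm d3 (by simp) d2 (by simp)
  simp only [divg, Hfield, Bfield, curl, cross, commV, Prod.mk_add_mk, Prod.smul_mk,
    h1.map_add, h2.map_add, h3.map_add, h1.map_sub', h2.map_sub', h3.map_sub',
    h1.map_smul, h2.map_smul, h3.map_smul, h1.leibniz, h2.leibniz, h3.leibniz,
    c21, c31, c32, smul_sub, smul_add, mul_sub, sub_mul]
  abel

end NC
end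
end

section
/- (Noncommutative Faraday equation.) Let B be a unital associative ℂ-algebra with four pairwise commuting ℂ-linear derivations ∂₀, ∂₁, ∂₂, ∂₃, let φ ∈ B and A = (A₁,A₂,A₃) be arbitrary, and let E, Bf, D, H be as defined below. Then ∇×D + ∂₀H = i[φ,Bf] − i(E×A + A×E), where ∂₀H := (∂₀H₁,∂₀H₂,∂₀H₃) and [φ,Bf] := (φBf_k − Bf_kφ)_k. In particular the noncommutative magnetic current density −j^m := i[φ,Bf] − i(E×A + A×E) is produced by every gauge potential. -/
noncomputable section

namespace NC

theorem IsDer.map_zero' {B : Type*} [Ring B] [Algebra ℂ B] {δ : B → B}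
    (h : IsDer δ) : δ 0 = 0 := by
  have := h.map_add 0 0
  simpa using this.symm

theorem IsDer.map_neg' {B : Type*} [Ring B] [Algebra ℂ B] {δ : B → B}
    (h : IsDer δ) (a : B) : δ (-a) = -δ a := by
  have h1 := h.map_add a (-a)
  rw [add_neg_cancel, h.map_zero'] at h1
  exact (neg_eq_of_add_eq_zero_right h1.symm).symm

/-- **Noncommutative Faraday equation**: for every gauge potential `(φ,A)`,
`∇×D + ∂₀H = i[φ,Bf] - i(E×A + A×E)`; the right-hand side is the
noncommutative magnetic current density `-j^m`. -/
theorem nc_faraday_equation {B : Type*} [Ring B] [Algebra ℂ B]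
    (d0 d1 d2 d3 : B → B)
    (h0 : IsDer d0) (h1 : IsDer d1) (h2 : IsDer d2) (h3 : IsDer d3)
    (hcomm : ∀ δ ∈ [d0, d1, d2, d3], ∀ δ' ∈ [d0, d1, d2, d3], ∀ x : B,
      δ (δ' x) = δ' (δ x))
    (φ : B) (A : B × B × B) :
    curl d1 d2 d3 (Dfield d0 d1 d2 d3 φ A) + dmap d0 (Hfield d1 d2 d3 A) =
      Complex.I • commS φ (Bfield d1 d2 d3 A) -
        Complex.I • (cross (Efield d0 d1 d2 d3 φ A) A +
          cross A (Efield d0 d1 d2 d3 φ A)) := by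
  have c10 : ∀ x, d1 (d0 x) = d0 (d1 x) := fun x => hcomm d1 (by simp) d0 (by simp) x
  have c20 : ∀ x, d2 (d0 x) = d0 (d2 x) := fun x => hcomm d2 (by simp) d0 (by simp) x
  have c30 : ∀ x, d3 (d0 x) = d0 (d3 x) := fun x => hcomm d3 (by simp) d0 (by simp) x
  have c21 : ∀ x, d2 (d1 x) = d1 (d2 x) := fun x => hcomm d2 (by simp) d1 (by simp) x
  have c31 : ∀ x, d3 (d1 x) = d1 (d3 x) := fun x => hcomm d3 (by simp) d1 (by simp) x
  have c32 : ∀ x, d3 (d2 x) = d2 (d3 x) := fun x => hcomm d3 (by simp) d2 (by simp) x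
  obtain ⟨A1, A2, A3⟩ := A
  simp only [Dfield, Efield, Bfield, Hfield, curl, dmap, grad, commS, cross,
    Prod.mk_add_mk, Prod.neg_mk, Prod.mk_sub_mk, Prod.smul_mk, Prod.mk.injEq]
  simp only [h0.map_add, h1.map_add, h2.map_add, h3.map_add,
    h0.map_sub', h1.map_sub', h2.map_sub', h3.map_sub',
    h0.map_neg', h1.map_neg', h2.map_neg', h3.map_neg',
    h0.map_smul, h1.map_smul, h2.map_smul, h3.map_smul,
    h0.leibniz, h1.leibniz, h2.leibniz, h3.leibniz,
    c10, c20, c30, c21, c31, c32]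
  refine ⟨?_, ?_, ?_⟩ <;>
  · simp only [Algebra.smul_def, smul_sub, smul_add, smul_neg]
    noncomm_ring

end NC
end
end

section
/- Let q be a real number with q ∉ {0, 1, −1}. In the Laurent polynomial algebra H = ℂ[z,z⁻¹] with counit ε := (evaluation at 1), antipode S determined by S(zⁿ) = z⁻ⁿ, and star operation (Σ aₘ zᵐ)* := Σ conj(aₘ) z⁻ᵐ, let ev_{q²} and ev_{q⁻²} be the evaluation homomorphisms at q² and q⁻², and set R := ker ε ∩ ker ev_{q²} ∩ ker ev_{q⁻²}. Then: (1) R is an ideal of H contained in ker ε; (2) (S(R))* ⊆ R; (3) the quotient ℂ-vector space ker ε / R has dimension 2, and the classes of z − 1 and z⁻¹ − 1 form a basis of it. -/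
noncomputable section

namespace U1FODC

/-- Evaluation at `t ∈ ℂ` of a Laurent polynomial, `ev_t(Σ aₘ zᵐ) = Σ aₘ tᵐ`,
as a ℂ-linear map. -/
def evL (t : ℂ) : LaurentPolynomial ℂ →ₗ[ℂ] ℂ :=
  Finsupp.lsum ℂ (fun n : ℤ => t ^ n • (LinearMap.id : ℂ →ₗ[ℂ] ℂ)) ∘ₗ
    (AddMonoidAlgebra.coeffLinearEquiv ℂ).toLinearMap

theorem evL_T (t : ℂ) (n : ℤ) : evL t (LaurentPolynomial.T n) = t ^ n := by
  rw [LaurentPolynomial.T, evL]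
  simp only [LinearMap.comp_apply, LinearEquiv.coe_coe,
    AddMonoidAlgebra.coeffLinearEquiv_apply, AddMonoidAlgebra.coeff_single]
  erw [Finsupp.lsum_single]
  simp

theorem evL_one (t : ℂ) : evL t 1 = 1 := by
  rw [← LaurentPolynomial.T_zero, evL_T, zpow_zero]

/-- The antipode `S(Σ aₘ zᵐ) = Σ aₘ z⁻ᵐ`. -/
def antipode (f : LaurentPolynomial ℂ) : LaurentPolynomial ℂ :=
  AddMonoidAlgebra.ofCoeff (Finsupp.mapDomain (fun n => -n) f.coeff)

/-- The star operation `(Σ aₘ zᵐ)* = Σ conj(aₘ) z⁻ᵐ`. -/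
def starH (f : LaurentPolynomial ℂ) : LaurentPolynomial ℂ :=
  AddMonoidAlgebra.ofCoeff
    (Finsupp.mapDomain (fun n => -n) (Finsupp.mapRange (starRingEnd ℂ) (map_zero _) f.coeff))

/-- `ker ε`, where the counit `ε` is evaluation at `1`, as a ℂ-subspace. -/
def Keps : Submodule ℂ (LaurentPolynomial ℂ) := LinearMap.ker (evL 1)

/-- `R := ker ε ∩ ker ev_{q²} ∩ ker ev_{q⁻²}`, as a ℂ-subspace. -/
def Rsub (q : ℝ) : Submodule ℂ (LaurentPolynomial ℂ) :=
  LinearMap.ker (evL 1) ⊓ LinearMap.ker (evL ((q : ℂ) ^ 2)) ⊓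
    LinearMap.ker (evL ((q : ℂ) ^ (-2 : ℤ)))

/-- `R` viewed as a subspace of `ker ε`. -/
def Rin (q : ℝ) : Submodule ℂ Keps := (Rsub q).comap Keps.subtype

/-- The quantum (dual) Lie algebra `invΓ = ker ε / R`. -/
abbrev invGamma (q : ℝ) := Keps ⧸ Rin q

/-- `z - 1` as an element of `ker ε`. -/
def zm1 : Keps :=
  ⟨LaurentPolynomial.T 1 - 1, by
    rw [Keps, LinearMap.mem_ker, map_sub, evL_T, evL_one, one_zpow, sub_self]⟩

/-- `z⁻¹ - 1` as an element of `ker ε`. -/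
def zim1 : Keps :=
  ⟨LaurentPolynomial.T (-1) - 1, by
    rw [Keps, LinearMap.mem_ker, map_sub, evL_T, evL_one, one_zpow, sub_self]⟩

/- ### auxiliary lemmas -/

theorem evL_single (t : ℂ) (n : ℤ) (a : ℂ) :
    evL t (AddMonoidAlgebra.single n a) = t ^ n * a := by
  rw [evL]
  simp only [LinearMap.comp_apply, LinearEquiv.coe_coe,
    AddMonoidAlgebra.coeffLinearEquiv_apply, AddMonoidAlgebra.coeff_single]
  erw [Finsupp.lsum_single]
  simp

/-- evaluation as a ring hom, at a unit -/
def evRH (u : ℂˣ) : LaurentPolynomial ℂ →+* ℂ :=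
  AddMonoidAlgebra.liftNCRingHom (RingHom.id ℂ)
    ((Units.coeHom ℂ).comp (zpowersHom ℂˣ u)) (fun _ _ => Commute.all _ _)

theorem evRH_eq (u : ℂˣ) (f : LaurentPolynomial ℂ) : evRH u f = evL (u : ℂ) f := by
  induction f using AddMonoidAlgebra.induction_linear with
  | zero => simp
  | add f g hf hg => rw [map_add, map_add, hf, hg]
  | single n a =>
      rw [evL_single, evRH]
      erw [AddMonoidAlgebra.liftNC_single]
      simp [zpowersHom, mul_comm]

theorem starH_antipode (f : LaurentPolynomial ℂ) :
    starH (antipode f) =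
      AddMonoidAlgebra.ofCoeff (Finsupp.mapRange (starRingEnd ℂ) (map_zero _) f.coeff) := by
  rw [starH, antipode, AddMonoidAlgebra.coeff_ofCoeff, ← Finsupp.mapDomain_mapRange _ _ _ _ (map_add _),
    ← Finsupp.mapDomain_comp]
  simp [Function.comp_def]

theorem evL_conj (t : ℂ) (ht : (starRingEnd ℂ) t = t) (f : LaurentPolynomial ℂ) :
    evL t (AddMonoidAlgebra.ofCoeff (Finsupp.mapRange (starRingEnd ℂ) (map_zero _) f.coeff)) =
      (starRingEnd ℂ) (evL t f) := by
  induction f using AddMonoidAlgebra.induction_linear with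
  | zero => simp
  | add f g hf hg =>
      rw [AddMonoidAlgebra.coeff_add, Finsupp.mapRange_add (map_add _),
        AddMonoidAlgebra.ofCoeff_add, map_add, hf, hg]
      exact ((map_add (starRingEnd ℂ) _ _).symm).trans
        (congrArg _ (map_add (evL t) f g).symm)
  | single n a =>
      rw [AddMonoidAlgebra.coeff_single, Finsupp.mapRange_single, AddMonoidAlgebra.ofCoeff_single,
        evL_single, evL_single, map_mul, map_zpow₀, ht]

/-- For real `q ∉ {0,1,-1}`: (1) `R = ker ε ∩ ker ev_{q²} ∩ ker ev_{q⁻²}` is an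
ideal of `H = ℂ[z,z⁻¹]` contained in `ker ε`; (2) `(S(R))* ⊆ R`; (3) the quotient
`ker ε / R` is 2-dimensional over ℂ, and the classes of `z - 1` and `z⁻¹ - 1`
form a basis of it. -/
theorem fodc_ideal_and_two_dimensional_quantum_lie_algebra
    (q : ℝ) (hq0 : q ≠ 0) (hq1 : q ≠ 1) (hqm1 : q ≠ -1) :
    (∃ I : Ideal (LaurentPolynomial ℂ),
      (I : Set (LaurentPolynomial ℂ)) = (Rsub q : Set (LaurentPolynomial ℂ))) ∧
    (Rsub q : Set (LaurentPolynomial ℂ)) ⊆ (Keps : Set (LaurentPolynomial ℂ)) ∧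
    (∀ f ∈ Rsub q, starH (antipode f) ∈ Rsub q) ∧
    Module.finrank ℂ (invGamma q) = 2 ∧
    ∃ b : Module.Basis (Fin 2) ℂ (invGamma q),
      b 0 = Submodule.Quotient.mk (p := Rin q) zm1 ∧
      b 1 = Submodule.Quotient.mk (p := Rin q) zim1 := by
  -- basic number facts
  obtain ⟨A, hAdef⟩ : ∃ a : ℂ, a = (q : ℂ) ^ 2 := ⟨_, rfl⟩
  obtain ⟨B, hBdef⟩ : ∃ b : ℂ, b = (q : ℂ) ^ (-2 : ℤ) := ⟨_, rfl⟩
  have hq0' : (q : ℂ) ≠ 0 := Complex.ofReal_ne_zero.2 hq0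
  have hA0 : A ≠ 0 := by rw [hAdef]; exact pow_ne_zero _ hq0'
  have hB : B = A⁻¹ := by
    rw [hBdef, hAdef, zpow_neg]
    norm_cast
  have hB0 : B ≠ 0 := by rw [hB]; exact inv_ne_zero hA0
  have hA1 : A ≠ 1 := by
    rw [hAdef]
    intro h
    have h2 : ((q : ℂ) - 1) * ((q : ℂ) + 1) = 0 := by linear_combination h
    rcases mul_eq_zero.1 h2 with h3 | h3
    · exact hq1 (by exact_mod_cast sub_eq_zero.1 h3)
    · exact hqm1 (by exact_mod_cast eq_neg_of_add_eq_zero_left h3)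
  have hB1 : B ≠ 1 := by rw [hB]; exact fun h => hA1 (inv_eq_one.mp h)
  have hAm1 : A ≠ -1 := by
    rw [hAdef]
    intro h
    have hpos : (q : ℝ) ^ 2 + 1 > 0 := by positivity
    have h2 : ((q ^ 2 + 1 : ℝ) : ℂ) = 0 := by push_cast; linear_combination h
    exact absurd (Complex.ofReal_eq_zero.1 h2) (ne_of_gt hpos)
  have hAB : A ≠ B := by
    intro h
    rw [hB] at h
    have hAA : A * A = 1 := by
      field_simp at h
      linear_combination h
    have h2 : (A - 1) * (A + 1) = 0 := by linear_combination hAA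
    rcases mul_eq_zero.1 h2 with h3 | h3
    · exact hA1 (sub_eq_zero.1 h3)
    · exact hAm1 (eq_neg_of_add_eq_zero_left h3)
  have hsum : A + B - 2 ≠ 0 := by
    rw [hB]
    intro h
    have h2 : A * A + 1 - 2 * A = 0 := by
      field_simp at h
      linear_combination h
    have h3 : (A - 1) ^ 2 = 0 := by linear_combination h2
    exact hA1 (sub_eq_zero.1 (pow_eq_zero_iff two_ne_zero |>.1 h3))
  have hA1' : A - 1 ≠ 0 := sub_ne_zero.2 hA1
  have hB1' : B - 1 ≠ 0 := sub_ne_zero.2 hB1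
  -- part (1): the ideal
  have part1 : ∃ I : Ideal (LaurentPolynomial ℂ),
      (I : Set (LaurentPolynomial ℂ)) = (Rsub q : Set (LaurentPolynomial ℂ)) := by
    refine ⟨RingHom.ker (evRH 1) ⊓ RingHom.ker (evRH (Units.mk0 A hA0)) ⊓
      RingHom.ker (evRH (Units.mk0 B hB0)), ?_⟩
    ext f
    simp only [SetLike.mem_coe, Submodule.mem_inf, RingHom.mem_ker, Rsub, LinearMap.mem_ker,
      evRH_eq, Units.val_mk0, Units.val_one, hAdef, hBdef]
  -- part (2): containment
  have part2 : (Rsub q : Set (LaurentPolynomial ℂ)) ⊆ (Keps : Set (LaurentPolynomial ℂ)) := by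
    intro f hf
    have h : f ∈ Rsub q := hf
    rw [Rsub] at h
    exact h.1.1
  -- star-antipode stability
  have part3 : ∀ f ∈ Rsub q, starH (antipode f) ∈ Rsub q := by
    intro f hf
    rw [Rsub, Submodule.mem_inf, Submodule.mem_inf, LinearMap.mem_ker, LinearMap.mem_ker,
      LinearMap.mem_ker] at hf ⊢
    obtain ⟨⟨h1, h2⟩, h3⟩ := hf
    have ht1 : (starRingEnd ℂ) (1 : ℂ) = 1 := map_one _
    have htA : (starRingEnd ℂ) ((q : ℂ) ^ 2) = (q : ℂ) ^ 2 := by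
      rw [map_pow, Complex.conj_ofReal]
    have htB : (starRingEnd ℂ) ((q : ℂ) ^ (-2 : ℤ)) = (q : ℂ) ^ (-2 : ℤ) := by
      rw [map_zpow₀, Complex.conj_ofReal]
    rw [starH_antipode]
    exact ⟨⟨by rw [evL_conj _ ht1, h1, map_zero], by rw [evL_conj _ htA, h2, map_zero]⟩,
      by rw [evL_conj _ htB, h3, map_zero]⟩
  -- part (3): dimension and basis
  let Φ : Keps →ₗ[ℂ] ℂ × ℂ :=
    LinearMap.prod ((evL A).comp Keps.subtype) ((evL B).comp Keps.subtype)
  have hΦapp : ∀ x : Keps, Φ x = (evL A x.1, evL B x.1) := fun x => rfl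
  have hker : LinearMap.ker Φ = Rin q := by
    ext x
    have hx : evL 1 x.1 = 0 := x.2
    simp only [LinearMap.mem_ker, hΦapp, Prod.mk_eq_zero, Rin, Submodule.mem_comap,
      Submodule.coe_subtype, Rsub, Submodule.mem_inf, LinearMap.mem_ker, ← hAdef, ← hBdef]
    tauto
  have hΦz0 : Φ zm1 = (A - 1, B - 1) := by
    rw [hΦapp]
    show (evL A (LaurentPolynomial.T 1 - 1), evL B (LaurentPolynomial.T 1 - 1)) = _
    rw [map_sub, map_sub, evL_T, evL_T, evL_one, evL_one, zpow_one, zpow_one]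
  have hΦz1 : Φ zim1 = (B - 1, A - 1) := by
    rw [hΦapp]
    show (evL A (LaurentPolynomial.T (-1) - 1), evL B (LaurentPolynomial.T (-1) - 1)) = _
    rw [map_sub, map_sub, evL_T, evL_T, evL_one, evL_one, zpow_neg_one, zpow_neg_one,
      ← hB, hB, inv_inv]
  -- basis of ℂ × ℂ
  have hli : LinearIndependent ℂ ![((A - 1 : ℂ), (B - 1 : ℂ)), (B - 1, A - 1)] := by
    rw [linearIndependent_fin2]
    constructor
    · intro h
      simp only [Matrix.cons_val_one, Matrix.head_cons, Matrix.cons_val_zero, Prod.mk_eq_zero] at h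
      exact hA1' h.2
    · intro a h
      simp only [Matrix.cons_val_one, Matrix.head_cons, Matrix.cons_val_zero, Prod.smul_mk,
        smul_eq_mul, Prod.mk.injEq] at h
      obtain ⟨e0, e1⟩ := h
      have key : (a ^ 2 - 1) * (A - 1) = 0 := by linear_combination a * e1 + e0
      have ha2 : a ^ 2 - 1 = 0 := by
        rcases mul_eq_zero.1 key with h' | h'
        · exact h'
        · exact absurd h' hA1'
      have ha : (a - 1) * (a + 1) = 0 := by linear_combination ha2
      rcases mul_eq_zero.1 ha with h' | h'
      · have ha1 : a = 1 := sub_eq_zero.1 h'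
        rw [ha1, one_mul] at e1
        exact hAB (by linear_combination e1)
      · have ham1 : a = -1 := eq_neg_of_add_eq_zero_left h'
        rw [ham1] at e1
        exact hsum (by linear_combination -e1)
  have hcard : Fintype.card (Fin 2) = Module.finrank ℂ (ℂ × ℂ) := by simp
  let vB : Module.Basis (Fin 2) ℂ (ℂ × ℂ) := basisOfLinearIndependentOfCardEqFinrank hli hcard
  have hvB : ⇑vB = ![((A - 1 : ℂ), (B - 1 : ℂ)), (B - 1, A - 1)] :=
    coe_basisOfLinearIndependentOfCardEqFinrank hli hcard
  have hvB0 : vB 0 = (A - 1, B - 1) := by rw [hvB]; rfl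
  have hvB1 : vB 1 = (B - 1, A - 1) := by rw [hvB]; rfl
  -- Φ is surjective
  have hrange : LinearMap.range Φ = ⊤ := by
    rw [eq_top_iff, ← vB.span_eq, Submodule.span_le]
    rintro x ⟨i, rfl⟩
    fin_cases i
    · exact ⟨zm1, hΦz0.trans hvB0.symm⟩
    · exact ⟨zim1, hΦz1.trans hvB1.symm⟩
  -- the induced equivalence
  have hle : Rin q ≤ LinearMap.ker Φ := hker.ge
  let ebar : invGamma q →ₗ[ℂ] ℂ × ℂ := (Rin q).liftQ Φ hle
  have hinj : LinearMap.ker ebar = ⊥ := Submodule.ker_liftQ_eq_bot' _ _ hker.symm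
  have hrng : LinearMap.range ebar = ⊤ := by
    rw [Submodule.range_liftQ]; exact hrange
  let e : invGamma q ≃ₗ[ℂ] ℂ × ℂ :=
    LinearEquiv.ofBijective ebar ⟨LinearMap.ker_eq_bot.1 hinj, LinearMap.range_eq_top.1 hrng⟩
  have he : ∀ x : Keps, e (Submodule.Quotient.mk (p := Rin q) x) = Φ x := fun x => rfl
  let b : Module.Basis (Fin 2) ℂ (invGamma q) := vB.map e.symm
  refine ⟨part1, part2, part3, ?_, b, ?_, ?_⟩
  · rw [Module.finrank_eq_card_basis b, Fintype.card_fin]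
  · rw [Module.Basis.map_apply, hvB0, LinearEquiv.symm_apply_eq, he]
    exact hΦz0.symm
  · rw [Module.Basis.map_apply, hvB1, LinearEquiv.symm_apply_eq, he]
    exact hΦz1.symm

end U1FODC
end
end

section
/- (Two-field noncommutative Bianchi identity.) Let Ω be an associative ℂ-algebra, d : Ω → Ω a ℂ-linear map, and A^e, A^m ∈ Ω elements with d(dA^e) = d(dA^m) = 0 and d(XY) = d(X)·Y − X·d(Y) for all X, Y ∈ {A^e, A^m}. Set Q := A^eA^m + A^mA^e, F^e := dA^e − iQ and F^m := dA^m − iQ. Then dF^e = dF^m = i(A^eF^m − F^mA^e) + i(A^mF^e − F^eA^m) + (A^m(A^e)² − (A^e)²A^m) + (A^e(A^m)² − (A^m)²A^e). -/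
/-- **Two-field noncommutative Bianchi identity** of the two-photon model:
with `Q := A^eA^m + A^mA^e`, `F^e := dA^e - iQ`, `F^m := dA^m - iQ`, one has
`dF^e = dF^m = i(A^eF^m - F^mA^e) + i(A^mF^e - F^eA^m)
  + (A^m(A^e)² - (A^e)²A^m) + (A^e(A^m)² - (A^m)²A^e)`. -/
theorem nc_two_field_bianchi_identity {Ω : Type*} [Ring Ω] [Algebra ℂ Ω]
    (d : Ω →ₗ[ℂ] Ω) (Ae Am : Ω)
    (hdde : d (d Ae) = 0) (hddm : d (d Am) = 0)
    (hLeibniz : ∀ X Y : Ω, (X = Ae ∨ X = Am) → (Y = Ae ∨ Y = Am) →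
      d (X * Y) = d X * Y - X * d Y) :
    d (d Ae - Complex.I • (Ae * Am + Am * Ae)) =
      Complex.I • (Ae * (d Am - Complex.I • (Ae * Am + Am * Ae)) -
          (d Am - Complex.I • (Ae * Am + Am * Ae)) * Ae) +
      Complex.I • (Am * (d Ae - Complex.I • (Ae * Am + Am * Ae)) -
          (d Ae - Complex.I • (Ae * Am + Am * Ae)) * Am) +
      (Am * (Ae * Ae) - (Ae * Ae) * Am) + (Ae * (Am * Am) - (Am * Am) * Ae) ∧
    d (d Am - Complex.I • (Ae * Am + Am * Ae)) =
      Complex.I • (Ae * (d Am - Complex.I • (Ae * Am + Am * Ae)) -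
          (d Am - Complex.I • (Ae * Am + Am * Ae)) * Ae) +
      Complex.I • (Am * (d Ae - Complex.I • (Ae * Am + Am * Ae)) -
          (d Ae - Complex.I • (Ae * Am + Am * Ae)) * Am) +
      (Am * (Ae * Ae) - (Ae * Ae) * Am) + (Ae * (Am * Am) - (Am * Am) * Ae) := by
  have h1 := hLeibniz Ae Am (Or.inl rfl) (Or.inr rfl)
  have h2 := hLeibniz Am Ae (Or.inr rfl) (Or.inl rfl)
  constructor <;>
    simp only [map_sub, map_smul, map_add, h1, h2, hdde, hddm, smul_sub, smul_add,
      mul_sub, sub_mul, mul_add, add_mul, mul_smul_comm, smul_mul_assoc, smul_smul,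
      Complex.I_mul_I, neg_smul, one_smul, zero_sub, mul_assoc] <;> abel
end

section
/- (Two-field noncommutative Gauss laws from the Bianchi identity.) Let B be a unital associative ℂ-algebra with four pairwise commuting ℂ-linear derivations ∂₀,…,∂₃, and let (φ^e, A^e) and (φ^m, A^m) be arbitrary pairs of a scalar and a triple of elements of B. With the fields defined below, ∇·H^e = ρ and ∇·D^m = ρ, where ρ := i[B^e,A^m] + i[E^m,A^e] and [X,Y] := Σ_k (X_kY_k − Y_kX_k). In particular both equations hold for every pair of gauge potentials. -/
noncomputable section

namespace NC

namespace TwoPhoton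

variable {B : Type*} [Ring B] [Algebra ℂ B]

/-- `K := [φ^m,A^e] + [φ^e,A^m]` (componentwise commutators). -/
def Kv (φe φm : B) (Ae Am : B × B × B) : B × B × B := commS φm Ae + commS φe Am

/-- `C := A^e×A^m + A^m×A^e`. -/
def Cv (Ae Am : B × B × B) : B × B × B := cross Ae Am + cross Am Ae

/-- `E^e := -∂₀A^e - ∇φ^e`. -/
def Ee (d0 d1 d2 d3 : B → B) (φe : B) (Ae : B × B × B) : B × B × B :=
  -dmap d0 Ae - grad d1 d2 d3 φe

/-- `B^e := ∇×A^e`. -/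
def Be (d1 d2 d3 : B → B) (Ae : B × B × B) : B × B × B := curl d1 d2 d3 Ae

/-- `B^m := -∂₀A^m - ∇φ^m`. -/
def Bm (d0 d1 d2 d3 : B → B) (φm : B) (Am : B × B × B) : B × B × B :=
  -dmap d0 Am - grad d1 d2 d3 φm

/-- `E^m := ∇×A^m`. -/
def Em (d1 d2 d3 : B → B) (Am : B × B × B) : B × B × B := curl d1 d2 d3 Am

/-- `D^e := E^e + iK`. -/
def De (d0 d1 d2 d3 : B → B) (φe : B) (Ae : B × B × B) (φm : B) (Am : B × B × B) :
    B × B × B :=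
  Ee d0 d1 d2 d3 φe Ae + Complex.I • Kv φe φm Ae Am

/-- `H^e := B^e + iC`. -/
def He (d1 d2 d3 : B → B) (Ae Am : B × B × B) : B × B × B :=
  Be d1 d2 d3 Ae + Complex.I • Cv Ae Am

/-- `H^m := B^m + iK`. -/
def Hm (d0 d1 d2 d3 : B → B) (φe : B) (Ae : B × B × B) (φm : B) (Am : B × B × B) :
    B × B × B :=
  Bm d0 d1 d2 d3 φm Am + Complex.I • Kv φe φm Ae Am

/-- `D^m := E^m + iC`. -/
def Dm (d1 d2 d3 : B → B) (Ae Am : B × B × B) : B × B × B :=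
  Em d1 d2 d3 Am + Complex.I • Cv Ae Am

end TwoPhoton


namespace TwoPhoton


section Aux

variable {B : Type*} [Ring B] [Algebra ℂ B]

lemma der_neg {δ : B → B} (h : IsDer δ) (a : B) : δ (-a) = -δ a := by
  have := h.map_smul (-1 : ℂ) a
  simpa using this

lemma der_sub {δ : B → B} (h : IsDer δ) (a b : B) :
    δ (a - b) = δ a - δ b := by
  rw [sub_eq_add_neg, h.map_add, der_neg h, sub_eq_add_neg]

lemma divg_add' (d1 d2 d3 : B → B) (h1 : IsDer d1) (h2 : IsDer d2) (h3 : IsDer d3)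
    (X Y : B × B × B) :
    divg d1 d2 d3 (X + Y) = divg d1 d2 d3 X + divg d1 d2 d3 Y := by
  simp only [divg, Prod.fst_add, Prod.snd_add, h1.map_add, h2.map_add, h3.map_add]
  abel

lemma divg_smul' (d1 d2 d3 : B → B) (h1 : IsDer d1) (h2 : IsDer d2) (h3 : IsDer d3)
    (c : ℂ) (X : B × B × B) :
    divg d1 d2 d3 (c • X) = c • divg d1 d2 d3 X := by
  simp only [divg, Prod.smul_fst, Prod.smul_snd, h1.map_smul, h2.map_smul, h3.map_smul,
    smul_add]

lemma divg_curl_zero (d1 d2 d3 : B → B) (h1 : IsDer d1) (h2 : IsDer d2) (h3 : IsDer d3)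
    (c12 : ∀ x : B, d1 (d2 x) = d2 (d1 x))
    (c13 : ∀ x : B, d1 (d3 x) = d3 (d1 x))
    (c23 : ∀ x : B, d2 (d3 x) = d3 (d2 x))
    (X : B × B × B) :
    divg d1 d2 d3 (curl d1 d2 d3 X) = 0 := by
  simp only [divg, curl, der_sub h1, der_sub h2, der_sub h3, c12, c13, c23]
  abel

lemma divg_Cv (d1 d2 d3 : B → B) (h1 : IsDer d1) (h2 : IsDer d2) (h3 : IsDer d3)
    (Ae Am : B × B × B) :
    divg d1 d2 d3 (Cv Ae Am) =
      commV (curl d1 d2 d3 Ae) Am + commV (curl d1 d2 d3 Am) Ae := by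
  simp only [divg, Cv, cross, commV, curl, Prod.fst_add, Prod.snd_add,
    h1.map_add, h2.map_add, h3.map_add, der_sub h1, der_sub h2, der_sub h3,
    h1.leibniz, h2.leibniz, h3.leibniz]
  noncomm_ring

end Aux

/-- **Two-field noncommutative Gauss laws** from the Bianchi identity of the
two-photon model: for every pair of gauge potentials `(φ^e,A^e)`, `(φ^m,A^m)`,
`∇·H^e = ρ` and `∇·D^m = ρ`, where `ρ := i[B^e,A^m] + i[E^m,A^e]`. -/
theorem nc_two_field_gauss_laws {B : Type*} [Ring B] [Algebra ℂ B]
    (d0 d1 d2 d3 : B → B)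
    (h0 : IsDer d0) (h1 : IsDer d1) (h2 : IsDer d2) (h3 : IsDer d3)
    (hcomm : ∀ δ ∈ [d0, d1, d2, d3], ∀ δ' ∈ [d0, d1, d2, d3], ∀ x : B,
      δ (δ' x) = δ' (δ x))
    (φe φm : B) (Ae Am : B × B × B) :
    divg d1 d2 d3 (He d1 d2 d3 Ae Am) =
      Complex.I • commV (Be d1 d2 d3 Ae) Am +
        Complex.I • commV (Em d1 d2 d3 Am) Ae ∧
    divg d1 d2 d3 (Dm d1 d2 d3 Ae Am) =
      Complex.I • commV (Be d1 d2 d3 Ae) Am +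
        Complex.I • commV (Em d1 d2 d3 Am) Ae := by
  have c12 : ∀ x : B, d1 (d2 x) = d2 (d1 x) := hcomm d1 (by simp) d2 (by simp)
  have c13 : ∀ x : B, d1 (d3 x) = d3 (d1 x) := hcomm d1 (by simp) d3 (by simp)
  have c23 : ∀ x : B, d2 (d3 x) = d3 (d2 x) := hcomm d2 (by simp) d3 (by simp)
  have hCv := divg_Cv d1 d2 d3 h1 h2 h3 Ae Am
  constructor
  · simp only [He, Be, Em]
    rw [divg_add' d1 d2 d3 h1 h2 h3, divg_smul' d1 d2 d3 h1 h2 h3,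
      divg_curl_zero d1 d2 d3 h1 h2 h3 c12 c13 c23, zero_add, hCv, smul_add]
  · simp only [Dm, Be, Em]
    rw [divg_add' d1 d2 d3 h1 h2 h3, divg_smul' d1 d2 d3 h1 h2 h3,
      divg_curl_zero d1 d2 d3 h1 h2 h3 c12 c13 c23, zero_add, hCv, smul_add]

end TwoPhoton

end NC
end
end

section
/- (ℤ₂ electric–magnetic duality of the two-photon model.) Let B be a unital associative ℂ-*-algebra with four pairwise commuting ℂ-linear derivations ∂₀,…,∂₃ satisfying ∂_μ(b*) = (∂_μ b)*. Consider the swap of potentials (φ^e, A^e, φ^m, A^m) ↦ (φ^m, A^m, φ^e, A^e). Denoting by a prime the fields and sources computed from the swapped potentials, one has: D^e′ = H^m, H^e′ = D^m, H^m′ = D^e, D^m′ = H^e, ρ′ = ρ, j′ = j, ρ^e′ = ρ^m, j^e′ = j^m, ρ^m′ = ρ^e, and j^m′ = j^e. Hence the full set of noncommutative Maxwell equations of the two-photon model is invariant under interchanging the electric and magnetic gauge potentials. -/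
noncomputable section

namespace NC

/-- componentwise star of a triple. -/
def starV {B : Type*} [Ring B] [StarRing B] (X : B × B × B) : B × B × B :=
  (star X.1, star X.2.1, star X.2.2)

namespace TwoPhoton

variable {B : Type*} [Ring B] [Algebra ℂ B] [StarRing B]

/-- `ρ := i[B^e,A^m] + i[E^m,A^e]`. -/
def rho (d1 d2 d3 : B → B) (Ae Am : B × B × B) : B :=
  Complex.I • commV (Be d1 d2 d3 Ae) Am + Complex.I • commV (Em d1 d2 d3 Am) Ae

/-- `-j := i[φ^m,B^e] + i[φ^e,E^m] - i(E^e×A^m + A^m×E^e + B^m×A^e + A^e×B^m)`. -/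
def negj (d0 d1 d2 d3 : B → B) (φe : B) (Ae : B × B × B) (φm : B) (Am : B × B × B) :
    B × B × B :=
  Complex.I • commS φm (Be d1 d2 d3 Ae) + Complex.I • commS φe (Em d1 d2 d3 Am) -
    Complex.I • (cross (Ee d0 d1 d2 d3 φe Ae) Am + cross Am (Ee d0 d1 d2 d3 φe Ae) +
      cross (Bm d0 d1 d2 d3 φm Am) Ae + cross Ae (Bm d0 d1 d2 d3 φm Am))

/-- `ρ^e := i[A^{m*}, D^e + H^m]`. -/
def rhoE (d0 d1 d2 d3 : B → B) (φe : B) (Ae : B × B × B) (φm : B) (Am : B × B × B) : B :=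
  Complex.I • commV (starV Am)
    (De d0 d1 d2 d3 φe Ae φm Am + Hm d0 d1 d2 d3 φe Ae φm Am)

/-- `ρ^m := i[A^{e*}, D^e + H^m]`. -/
def rhoM (d0 d1 d2 d3 : B → B) (φe : B) (Ae : B × B × B) (φm : B) (Am : B × B × B) : B :=
  Complex.I • commV (starV Ae)
    (De d0 d1 d2 d3 φe Ae φm Am + Hm d0 d1 d2 d3 φe Ae φm Am)

/-- `-j^e := i[D^e + H^m, φ^{m*}] + i((H^e + D^m)×A^{m*} + A^{m*}×(H^e + D^m))`. -/
def negjE (d0 d1 d2 d3 : B → B) (φe : B) (Ae : B × B × B) (φm : B) (Am : B × B × B) :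
    B × B × B :=
  Complex.I • commR (De d0 d1 d2 d3 φe Ae φm Am + Hm d0 d1 d2 d3 φe Ae φm Am)
      (star φm) +
    Complex.I • (cross (He d1 d2 d3 Ae Am + Dm d1 d2 d3 Ae Am) (starV Am) +
      cross (starV Am) (He d1 d2 d3 Ae Am + Dm d1 d2 d3 Ae Am))

/-- `-j^m := i[D^e + H^m, φ^{e*}] + i((H^e + D^m)×A^{e*} + A^{e*}×(H^e + D^m))`. -/
def negjM (d0 d1 d2 d3 : B → B) (φe : B) (Ae : B × B × B) (φm : B) (Am : B × B × B) :
    B × B × B :=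
  Complex.I • commR (De d0 d1 d2 d3 φe Ae φm Am + Hm d0 d1 d2 d3 φe Ae φm Am)
      (star φe) +
    Complex.I • (cross (He d1 d2 d3 Ae Am + Dm d1 d2 d3 Ae Am) (starV Ae) +
      cross (starV Ae) (He d1 d2 d3 Ae Am + Dm d1 d2 d3 Ae Am))

/-- **ℤ₂ electric–magnetic duality of the two-photon model**: under the swap of
potentials `(φ^e,A^e,φ^m,A^m) ↦ (φ^m,A^m,φ^e,A^e)` (primed fields/sources), one
has `D^e′ = H^m`, `H^e′ = D^m`, `H^m′ = D^e`, `D^m′ = H^e`, `ρ′ = ρ`, `j′ = j`,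
`ρ^e′ = ρ^m`, `j^e′ = j^m`, `ρ^m′ = ρ^e`, `j^m′ = j^e`. -/
theorem nc_two_photon_duality {B : Type*} [Ring B] [Algebra ℂ B] [StarRing B]
    (d0 d1 d2 d3 : B → B)
    (h0 : IsDer d0) (h1 : IsDer d1) (h2 : IsDer d2) (h3 : IsDer d3)
    (hcomm : ∀ δ ∈ [d0, d1, d2, d3], ∀ δ' ∈ [d0, d1, d2, d3], ∀ x : B,
      δ (δ' x) = δ' (δ x))
    (hstar : ∀ δ ∈ [d0, d1, d2, d3], ∀ b : B, δ (star b) = star (δ b))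
    (φe φm : B) (Ae Am : B × B × B) :
    De d0 d1 d2 d3 φm Am φe Ae = Hm d0 d1 d2 d3 φe Ae φm Am ∧
    He d1 d2 d3 Am Ae = Dm d1 d2 d3 Ae Am ∧
    Hm d0 d1 d2 d3 φm Am φe Ae = De d0 d1 d2 d3 φe Ae φm Am ∧
    Dm d1 d2 d3 Am Ae = He d1 d2 d3 Ae Am ∧
    rho d1 d2 d3 Am Ae = rho d1 d2 d3 Ae Am ∧
    negj d0 d1 d2 d3 φm Am φe Ae = negj d0 d1 d2 d3 φe Ae φm Am ∧
    rhoE d0 d1 d2 d3 φm Am φe Ae = rhoM d0 d1 d2 d3 φe Ae φm Am ∧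
    negjE d0 d1 d2 d3 φm Am φe Ae = negjM d0 d1 d2 d3 φe Ae φm Am ∧
    rhoM d0 d1 d2 d3 φm Am φe Ae = rhoE d0 d1 d2 d3 φe Ae φm Am ∧
    negjM d0 d1 d2 d3 φm Am φe Ae = negjE d0 d1 d2 d3 φe Ae φm Am := by
  have hK : Kv φm φe Am Ae = Kv φe φm Ae Am := add_comm _ _
  have hC : Cv Am Ae = Cv Ae Am := add_comm _ _
  have hEB : Ee d0 d1 d2 d3 φm Am = Bm d0 d1 d2 d3 φm Am := rfl
  have hBE : Be d1 d2 d3 Am = Em d1 d2 d3 Am := rfl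
  have hEB' : Bm d0 d1 d2 d3 φe Ae = Ee d0 d1 d2 d3 φe Ae := rfl
  have hBE' : Em d1 d2 d3 Ae = Be d1 d2 d3 Ae := rfl
  have hDe : De d0 d1 d2 d3 φm Am φe Ae = Hm d0 d1 d2 d3 φe Ae φm Am := by
    simp only [De, Hm, hK, hEB]
  have hHe : He d1 d2 d3 Am Ae = Dm d1 d2 d3 Ae Am := by
    simp only [He, Dm, hC, hBE]
  have hHm : Hm d0 d1 d2 d3 φm Am φe Ae = De d0 d1 d2 d3 φe Ae φm Am := by
    simp only [Hm, De, hK, hEB']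
  have hDm : Dm d1 d2 d3 Am Ae = He d1 d2 d3 Ae Am := by
    simp only [Dm, He, hC, hBE']
  refine ⟨hDe, hHe, hHm, hDm, ?_, ?_, ?_, ?_, ?_, ?_⟩
  · simp only [rho, hBE, hBE']; exact add_comm _ _
  · simp only [negj, hBE, hBE', hEB, hEB']
    congr 1
    · exact add_comm _ _
    · congr 1
      abel
  · simp only [rhoE, rhoM, hDe, hHm, add_comm (Hm d0 d1 d2 d3 φe Ae φm Am)]
  · simp only [negjE, negjM, hDe, hHm, hHe, hDm,
      add_comm (Hm d0 d1 d2 d3 φe Ae φm Am), add_comm (Dm d1 d2 d3 Ae Am)]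
  · simp only [rhoM, rhoE, hDe, hHm, add_comm (Hm d0 d1 d2 d3 φe Ae φm Am)]
  · simp only [negjM, negjE, hDe, hHm, hHe, hDm,
      add_comm (Hm d0 d1 d2 d3 φe Ae φm Am), add_comm (Dm d1 d2 d3 Ae Am)]


end TwoPhoton

end NC
end
end
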